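/- Let X be a multiset of complex numbers closed under conjugation, with Re(x) ≥ 0 for all x ∈ X, Σ_{x∈X} Re(x) ≤ 1/2, and |x| ≤ ρ for all x ∈ X where ρ ∈ X is positive real. Then for every even ℓ ≥ 6 not divisible by 4, Σ_{x∈X} x^ℓ ≤ (1/2)^ℓ, with equality only if ρ = 1/2 and ρ is the only nonzero element of X. -/

import Mathlib

open Complex

private lemma cos_key (k : ℕ) (θ : ℝ) (h0 : 0 ≤ θ) (h1 : θ ≤ Real.pi / 2) :
    Real.cos ((4 * k + 2 : ℕ) * θ) ≤ (4 * k + 2 : ℕ) * Real.cos θ := by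
  have hπ : 0 < Real.pi := Real.pi_pos
  set L : ℝ := ((4 * k + 2 : ℕ) : ℝ) with hLdef
  have hLval : L = 4 * (k : ℝ) + 2 := by push_cast [hLdef]; ring
  have hL2 : (2 : ℝ) ≤ L := by
    have : (0:ℝ) ≤ (k:ℝ) := Nat.cast_nonneg k
    rw [hLval]; linarith
  have hLpos : 0 < L := by linarith
  have hcosθ : 0 ≤ Real.cos θ :=
    Real.cos_nonneg_of_mem_Icc ⟨by linarith, h1⟩
  by_cases hcase : Real.pi / (2 * L) ≤ Real.pi / 2 - θ
  · -- far from π/2 : L cos θ ≥ 1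
    have hs : Real.cos θ = Real.sin (Real.pi / 2 - θ) := (Real.sin_pi_div_two_sub θ).symm
    have hu0 : 0 ≤ Real.pi / 2 - θ := le_trans (by positivity) hcase
    have hu1 : Real.pi / 2 - θ ≤ Real.pi / 2 := by linarith
    have hjordan : 2 / Real.pi * (Real.pi / 2 - θ) ≤ Real.sin (Real.pi / 2 - θ) :=
      Real.mul_le_sin hu0 hu1
    have h2 : 2 / Real.pi * (Real.pi / (2 * L)) ≤ Real.sin (Real.pi / 2 - θ) := by
      refine le_trans ?_ hjordan
      have : 0 < 2 / Real.pi := by positivity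
      exact mul_le_mul_of_nonneg_left hcase this.le
    have h3 : 2 / Real.pi * (Real.pi / (2 * L)) = 1 / L := by
      field_simp
    have h4 : 1 / L ≤ Real.cos θ := by rw [hs]; rw [h3] at h2; exact h2
    have h5 : 1 ≤ L * Real.cos θ := by
      have := mul_le_mul_of_nonneg_left h4 hLpos.le
      rwa [mul_one_div, div_self hLpos.ne'] at this
    exact le_trans (Real.cos_le_one _) h5
  · -- close to π/2 : cos(Lθ) ≤ 0
    push_neg at hcase
    set v : ℝ := L * (Real.pi / 2 - θ) with hv
    have hv0 : 0 ≤ v := by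
      have : θ ≤ Real.pi / 2 := h1
      have : 0 ≤ Real.pi / 2 - θ := by linarith
      positivity
    have hvlt : v < Real.pi / 2 := by
      have h2 : L * (Real.pi / (2 * L)) = Real.pi / 2 := by
        field_simp
      have := mul_lt_mul_of_pos_left hcase hLpos
      rw [h2] at this
      exact this
    have hLθ : L * θ = (2 * k + 1 : ℕ) * Real.pi - v := by
      rw [hv, hLval]; push_cast; ring
    have hcos2k1 : Real.cos ((2 * k + 1 : ℕ) * Real.pi) = -1 := by
      have : ((2 * k + 1 : ℕ) : ℝ) * Real.pi = Real.pi + (k : ℕ) * (2 * Real.pi) := by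
        push_cast; ring
      rw [this, Real.cos_add_nat_mul_two_pi, Real.cos_pi]
    have hsin2k1 : Real.sin ((2 * k + 1 : ℕ) * Real.pi) = 0 := Real.sin_nat_mul_pi _
    have hcosv : 0 ≤ Real.cos v :=
      Real.cos_nonneg_of_mem_Icc ⟨by linarith, hvlt.le⟩
    have : Real.cos (L * θ) = -Real.cos v := by
      rw [hLθ, Real.cos_sub, hcos2k1, hsin2k1]; ring
    rw [this]
    have : 0 ≤ L * Real.cos θ := mul_nonneg hLpos.le hcosθ
    linarith

private lemma re_pow_le (k ℓ : ℕ) (hk : ℓ = 4 * k + 2) (z : ℂ) (hz : 0 ≤ z.re)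
    (ρ : ℝ) (hρ : 0 ≤ ρ) (hzρ : ‖z‖ ≤ ρ) :
    (z ^ ℓ).re ≤ (ℓ : ℝ) * ρ ^ (ℓ - 1) * z.re := by
  rcases eq_or_ne z 0 with rfl | hz0
  · have hℓ0 : ℓ ≠ 0 := by omega
    simp [zero_pow hℓ0]
  · set r : ℝ := ‖z‖ with hr
    have hrpos : 0 < r := norm_pos_iff.mpr hz0
    set θ : ℝ := Complex.arg z with hθ
    have habsθ : |θ| ≤ Real.pi / 2 := Complex.abs_arg_le_pi_div_two_iff.2 hz
    have hzeq : z = (r : ℂ) * Complex.exp (θ * I) := (Complex.norm_mul_exp_arg_mul_I z).symm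
    have hre_z : z.re = r * Real.cos θ := by
      have := Complex.cos_arg hz0
      rw [← hθ, ← hr] at this
      field_simp at this ⊢
      linarith [this]
    have hre_pow : (z ^ ℓ).re = r ^ ℓ * Real.cos ((ℓ : ℝ) * θ) := by
      have : z ^ ℓ = ((r ^ ℓ : ℝ) : ℂ) * Complex.exp (((ℓ : ℝ) * θ : ℝ) * I) := by
        rw [hzeq, mul_pow, ← Complex.exp_nat_mul]
        push_cast
        ring_nf
      rw [this, Complex.re_ofReal_mul, Complex.exp_ofReal_mul_I_re]
    have hcosθ : 0 ≤ Real.cos θ := by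
      rw [← Real.cos_abs]
      exact Real.cos_nonneg_of_mem_Icc ⟨by linarith [abs_nonneg θ], habsθ⟩
    have hkey : Real.cos ((ℓ : ℝ) * θ) ≤ (ℓ : ℝ) * Real.cos θ := by
      have h1 := cos_key k |θ| (abs_nonneg θ) habsθ
      rw [← hk] at h1
      have h2 : Real.cos ((ℓ : ℝ) * |θ|) = Real.cos ((ℓ : ℝ) * θ) := by
        rcases abs_cases θ with ⟨h, _⟩ | ⟨h, _⟩
        · rw [h]
        · rw [h, mul_neg, Real.cos_neg]
      rw [h2, Real.cos_abs] at h1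
      exact h1
    rw [hre_pow, hre_z]
    have hrℓ : r ^ ℓ ≤ ρ ^ (ℓ - 1) * r := by
      have h1 : r ^ ℓ = r ^ (ℓ - 1) * r := by
        rw [← pow_succ]; congr 1; omega
      rw [h1]
      exact mul_le_mul_of_nonneg_right (pow_le_pow_left₀ hrpos.le hzρ _) hrpos.le
    rcases le_or_gt (Real.cos ((ℓ : ℝ) * θ)) 0 with hneg | hpos
    · have hL : r ^ ℓ * Real.cos ((ℓ : ℝ) * θ) ≤ 0 :=
        mul_nonpos_of_nonneg_of_nonpos (by positivity) hneg
      have hR : 0 ≤ (ℓ : ℝ) * ρ ^ (ℓ - 1) * (r * Real.cos θ) := by positivity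
      linarith
    · calc r ^ ℓ * Real.cos ((ℓ : ℝ) * θ)
          ≤ (ρ ^ (ℓ - 1) * r) * ((ℓ : ℝ) * Real.cos θ) := by
            apply mul_le_mul hrℓ hkey hpos.le
            positivity
        _ = (ℓ : ℝ) * ρ ^ (ℓ - 1) * (r * Real.cos θ) := by ring

theorem stmt_15 (f : ℕ → ℂ)
    (hre : ∀ n, 0 ≤ (f n).re)
    (hre_sum : Summable fun n => (f n).re)
    (hre_half : ∑' n, (f n).re ≤ 1 / 2)
    (hconj : ∃ e : Equiv.Perm ℕ, ∀ n, f (e n) = starRingEnd ℂ (f n))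
    (hsq : Summable fun n => ‖f n‖ ^ 2)
    (ρ : ℝ) (hρ : 0 < ρ) (hρ_mem : ∃ n, f n = (ρ : ℂ))
    (hρ_max : ∀ n, ‖f n‖ ≤ ρ)
    (ℓ : ℕ) (hℓ : 6 ≤ ℓ) (heven : Even ℓ) (hndiv : ¬ (4 ∣ ℓ)) :
    (Summable fun n => ‖f n ^ ℓ‖) ∧
      (∑' n, f n ^ ℓ).im = 0 ∧ (∑' n, f n ^ ℓ).re ≤ (1 / 2) ^ ℓ ∧
      ((∑' n, f n ^ ℓ).re = (1 / 2) ^ ℓ →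
        ρ = 1 / 2 ∧ ∀ n, f n ≠ 0 → f n = (ρ : ℂ)) := by
  classical
  obtain ⟨m, hm⟩ := heven
  obtain ⟨k, hk⟩ : ∃ k, ℓ = 4 * k + 2 := ⟨(ℓ - 2) / 4, by omega⟩
  obtain ⟨n₀, hn₀⟩ := hρ_mem
  -- summability of the absolute values
  have habs_le : ∀ n, ‖f n ^ ℓ‖ ≤ ρ ^ (ℓ - 2) * ‖f n‖ ^ 2 := by
    intro n
    rw [norm_pow]
    have h1 : ‖f n‖ ^ ℓ = ‖f n‖ ^ (ℓ - 2) * ‖f n‖ ^ 2 := by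
      rw [← pow_add]; congr 1; omega
    rw [h1]
    exact mul_le_mul_of_nonneg_right
      (pow_le_pow_left₀ (norm_nonneg _) (hρ_max n) _) (by positivity)
  have habs : Summable fun n => ‖f n ^ ℓ‖ :=
    Summable.of_nonneg_of_le (fun n => norm_nonneg _) habs_le (hsq.mul_left _)
  have hsum : Summable fun n => f n ^ ℓ := by
    refine Summable.of_norm ?_
    simpa using habs
  -- imaginary part vanishes
  have him : (∑' n, f n ^ ℓ).im = 0 := by
    obtain ⟨e, he⟩ := hconj
    have h1 : (starRingEnd ℂ) (∑' n, f n ^ ℓ) = ∑' n, f n ^ ℓ := by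
      calc (starRingEnd ℂ) (∑' n, f n ^ ℓ)
          = ∑' n, (starRingEnd ℂ) (f n ^ ℓ) := by
            rw [starRingEnd_apply, tsum_star]
            simp only [starRingEnd_apply]
        _ = ∑' n, f (e n) ^ ℓ := by
            refine tsum_congr fun n => ?_
            rw [he n, map_pow]
        _ = ∑' n, f n ^ ℓ := e.tsum_eq fun n => f n ^ ℓ
    exact Complex.conj_eq_iff_im.mp h1
  -- real-part analysis
  set g : ℕ → ℝ := fun n => (f n ^ ℓ).re with hg_def
  have hg : Summable g := by
    refine Summable.of_norm_bounded habs fun n => ?_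
    exact Complex.abs_re_le_norm _
  have hre_tsum : (∑' n, f n ^ ℓ).re = ∑' n, g n := Complex.re_tsum hsum
  have hre_n₀ : (f n₀).re = ρ := by rw [hn₀]; simp
  have hρ_half : ρ ≤ 1 / 2 := by
    have := Summable.le_tsum hre_sum n₀ fun m _ => hre m
    rw [hre_n₀] at this
    linarith
  have hg_n₀ : g n₀ = ρ ^ ℓ := by
    simp only [hg_def, hn₀, ← Complex.ofReal_pow, Complex.ofReal_re]
  have hkey : ∀ n, g n ≤ (ℓ : ℝ) * ρ ^ (ℓ - 1) * (f n).re :=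
    fun n => re_pow_le k ℓ hk (f n) (hre n) ρ hρ.le (hρ_max n)
  set F : ℕ → ℝ := fun n => if n = n₀ then 0 else g n with hF_def
  set R : ℕ → ℝ := fun n => if n = n₀ then 0 else (f n).re with hR_def
  have hF : Summable F := by
    refine hg.summable_of_eq_zero_or_self fun n => ?_
    by_cases h : n = n₀ <;> simp [hF_def, h]
  have hR : Summable R := by
    refine hre_sum.summable_of_eq_zero_or_self fun n => ?_
    by_cases h : n = n₀ <;> simp [hR_def, h]
  have hg_split : ∑' n, g n = ρ ^ ℓ + ∑' n, F n := by
    rw [Summable.tsum_eq_add_tsum_ite hg n₀, hg_n₀]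
  have hre_split : ∑' n, (f n).re = ρ + ∑' n, R n := by
    rw [Summable.tsum_eq_add_tsum_ite hre_sum n₀, hre_n₀]
  have hR_nonneg : ∀ n, 0 ≤ R n := by
    intro n; by_cases h : n = n₀ <;> simp [hR_def, h, hre n]
  have hR_le : ∑' n, R n ≤ 1 / 2 - ρ := by
    rw [hre_split] at hre_half; linarith
  have hR_tsum_nonneg : 0 ≤ ∑' n, R n := tsum_nonneg hR_nonneg
  have hF_le : ∑' n, F n ≤ (ℓ : ℝ) * ρ ^ (ℓ - 1) * ∑' n, R n := by
    rw [← Summable.tsum_mul_left _ hR]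
    refine Summable.tsum_le_tsum (fun n => ?_) hF (hR.mul_left _)
    by_cases h : n = n₀
    · simp [hF_def, hR_def, h]
    · simp only [hF_def, hR_def, if_neg h]
      exact hkey n
  have hC : 0 ≤ (ℓ : ℝ) * ρ ^ (ℓ - 1) := by positivity
  -- geometric sum comparison
  have hgeom_eq : ((1:ℝ)/2) ^ ℓ - ρ ^ ℓ
      = (∑ i ∈ Finset.range ℓ, ((1:ℝ)/2) ^ i * ρ ^ (ℓ - 1 - i)) * ((1:ℝ)/2 - ρ) :=
    (geom_sum₂_mul (1/2 : ℝ) ρ ℓ).symm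
  have hterm_ge : ∀ i ∈ Finset.range ℓ, ρ ^ (ℓ - 1) ≤ ((1:ℝ)/2) ^ i * ρ ^ (ℓ - 1 - i) := by
    intro i hi
    rw [Finset.mem_range] at hi
    have h1 : ρ ^ (ℓ - 1) = ρ ^ i * ρ ^ (ℓ - 1 - i) := by
      rw [← pow_add]; congr 1; omega
    rw [h1]
    exact mul_le_mul_of_nonneg_right (pow_le_pow_left₀ hρ.le hρ_half _) (by positivity)
  have hgeom_ge : (ℓ : ℝ) * ρ ^ (ℓ - 1)
      ≤ ∑ i ∈ Finset.range ℓ, ((1:ℝ)/2) ^ i * ρ ^ (ℓ - 1 - i) := by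
    calc (ℓ : ℝ) * ρ ^ (ℓ - 1) = ∑ _i ∈ Finset.range ℓ, ρ ^ (ℓ - 1) := by
          rw [Finset.sum_const, Finset.card_range, nsmul_eq_mul]
      _ ≤ _ := Finset.sum_le_sum hterm_ge
  have hmain : ρ ^ ℓ + (ℓ : ℝ) * ρ ^ (ℓ - 1) * (1/2 - ρ) ≤ (1/2 : ℝ) ^ ℓ := by
    have h1 : (ℓ : ℝ) * ρ ^ (ℓ - 1) * (1/2 - ρ)
        ≤ (∑ i ∈ Finset.range ℓ, ((1:ℝ)/2) ^ i * ρ ^ (ℓ - 1 - i)) * ((1:ℝ)/2 - ρ) :=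
      mul_le_mul_of_nonneg_right hgeom_ge (by linarith)
    rw [← hgeom_eq] at h1
    linarith
  have hg_bound : ∑' n, g n ≤ (1/2 : ℝ) ^ ℓ := by
    rw [hg_split]
    have h1 : (ℓ : ℝ) * ρ ^ (ℓ - 1) * ∑' n, R n ≤ (ℓ : ℝ) * ρ ^ (ℓ - 1) * (1/2 - ρ) :=
      mul_le_mul_of_nonneg_left hR_le hC
    linarith [hF_le]
  refine ⟨habs, him, by rw [hre_tsum]; exact_mod_cast hg_bound, ?_⟩
  -- equality case
  intro heq
  rw [hre_tsum] at heq
  have heq' : ∑' n, g n = (1/2 : ℝ) ^ ℓ := heq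
  have hρ_eq : ρ = 1 / 2 := by
    by_contra hne
    have hρlt : ρ < 1 / 2 := lt_of_le_of_ne hρ_half hne
    -- strict geometric inequality
    have hstrict : (ℓ : ℝ) * ρ ^ (ℓ - 1)
        < ∑ i ∈ Finset.range ℓ, ((1:ℝ)/2) ^ i * ρ ^ (ℓ - 1 - i) := by
      have h1 : (ℓ : ℝ) * ρ ^ (ℓ - 1) = ∑ _i ∈ Finset.range ℓ, ρ ^ (ℓ - 1) := by
        rw [Finset.sum_const, Finset.card_range, nsmul_eq_mul]
      rw [h1]
      refine Finset.sum_lt_sum hterm_ge ⟨1, Finset.mem_range.2 (by omega), ?_⟩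
      have h2 : ρ ^ (ℓ - 1) = ρ ^ 1 * ρ ^ (ℓ - 1 - 1) := by
        rw [← pow_add]; congr 1; omega
      rw [h2]
      refine mul_lt_mul_of_pos_right ?_ (by positivity)
      simpa using hρlt
    have hmain' : ρ ^ ℓ + (ℓ : ℝ) * ρ ^ (ℓ - 1) * (1/2 - ρ) < (1/2 : ℝ) ^ ℓ := by
      have h1 : (ℓ : ℝ) * ρ ^ (ℓ - 1) * (1/2 - ρ)
          < (∑ i ∈ Finset.range ℓ, ((1:ℝ)/2) ^ i * ρ ^ (ℓ - 1 - i)) * ((1:ℝ)/2 - ρ) :=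
        mul_lt_mul_of_pos_right hstrict (by linarith)
      rw [← hgeom_eq] at h1
      linarith
    have h1 : (ℓ : ℝ) * ρ ^ (ℓ - 1) * ∑' n, R n ≤ (ℓ : ℝ) * ρ ^ (ℓ - 1) * (1/2 - ρ) :=
      mul_le_mul_of_nonneg_left hR_le hC
    have : ∑' n, g n < (1/2 : ℝ) ^ ℓ := by
      rw [hg_split]; linarith [hF_le]
    linarith [heq'.ge, this]
  refine ⟨hρ_eq, ?_⟩
  -- all other elements vanish
  have hR_zero : ∀ n, n ≠ n₀ → (f n).re = 0 := by
    intro n hn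
    have h1 : R n ≤ ∑' n, R n := Summable.le_tsum hR n fun j _ => hR_nonneg j
    have h2 : ∑' n, R n ≤ 0 := by rw [hρ_eq] at hR_le; linarith
    have h3 : R n = (f n).re := by simp [hR_def, hn]
    have := hre n
    rw [h3] at h1
    linarith
  have hF_tsum : ∑' n, F n = 0 := by
    have : ρ ^ ℓ = (1/2 : ℝ) ^ ℓ := by rw [hρ_eq]
    rw [hg_split, this] at heq'
    linarith
  have hF_nonpos : ∀ n, F n ≤ 0 := by
    intro n
    by_cases h : n = n₀
    · simp [hF_def, h]
    · have hre0 := hR_zero n h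
      obtain ⟨b, hb⟩ : ∃ b : ℝ, f n = (b : ℂ) * I :=
        ⟨(f n).im, by apply Complex.ext <;> simp [hre0]⟩
      have hIℓ : (I : ℂ) ^ ℓ = -1 := by
        rw [hk, pow_add, pow_mul]
        simp [Complex.I_sq, I_pow_four]
      have h2' : (f n : ℂ) ^ ℓ = -(((b ^ ℓ : ℝ)) : ℂ) := by
        rw [hb, mul_pow, hIℓ]
        push_cast
        ring
      have : g n = -(b ^ ℓ) := by
        rw [hg_def]
        simp only
        rw [h2']
        simp [← Complex.ofReal_pow]
      simp only [hF_def, if_neg h, this]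
      have : 0 ≤ b ^ ℓ := Even.pow_nonneg ⟨m, hm⟩ b
      linarith
  have hF_zero : ∀ n, F n = 0 := by
    intro n
    have hFn : Summable fun j => -F j := hF.neg
    have h1 : -F n ≤ ∑' j, -F j :=
      Summable.le_tsum hFn n fun j _ => neg_nonneg.2 (hF_nonpos j)
    rw [tsum_neg, hF_tsum] at h1
    have := hF_nonpos n
    simp only [neg_zero] at h1
    linarith
  intro n hn
  by_cases h : n = n₀
  · rw [h, hn₀]
  · exfalso
    have h1 : g n = 0 := by
      have := hF_zero n
      simpa [hF_def, if_neg h] using this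
    have hre0 := hR_zero n h
    obtain ⟨b, hb⟩ : ∃ b : ℝ, f n = (b : ℂ) * I :=
      ⟨(f n).im, by apply Complex.ext <;> simp [hre0]⟩
    have hIℓ : (I : ℂ) ^ ℓ = -1 := by
      rw [hk, pow_add, pow_mul]
      simp [Complex.I_sq, I_pow_four]
    have h2' : (f n : ℂ) ^ ℓ = -(((b ^ ℓ : ℝ)) : ℂ) := by
      rw [hb, mul_pow, hIℓ]
      push_cast
      ring
    have h2 : g n = -(b ^ ℓ) := by
      rw [hg_def]
      simp only
      rw [h2']
      simp [← Complex.ofReal_pow]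
    have h3 : b ^ ℓ = 0 := by rw [h2] at h1; linarith
    have h4 : b = 0 := by
      exact pow_eq_zero_iff (by omega : ℓ ≠ 0) |>.mp h3
    apply hn
    rw [hb, h4]
    simp
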